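/- For any prime p, positive integer a, and natural number n, the Bell polynomials satisfy the Gertsch–Robert congruence B_{p^a + n}(x) ≡ B_{n+1}(x) + B_n(x)·∑_{r=1}^{a} x^{p^r} modulo p·Z_p[x]. -/

import Mathlib

/-- Stirling numbers of the second kind. -/
def stirling2 : ℕ → ℕ → ℕ
  | 0, 0 => 1
  | 0, _ + 1 => 0
  | _ + 1, 0 => 0
  | n + 1, k + 1 => (k + 1) * stirling2 n (k + 1) + stirling2 n k

/-- The Bell polynomial `B_n(x) = ∑_{k=0}^n S(n,k) x^k`. -/
noncomputable def bellPoly (R : Type*) [CommRing R] (n : ℕ) : Polynomial R :=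
  ∑ k ∈ Finset.range (n + 1), Polynomial.C (stirling2 n k : R) * Polynomial.X ^ k

set_option linter.unusedVariables false

lemma stirling2_zero_right (n : ℕ) : stirling2 (n+1) 0 = 0 := rfl

lemma stirling2_eq_zero_of_lt : ∀ {n k : ℕ}, n < k → stirling2 n k = 0
  | 0, _ + 1, _ => rfl
  | n + 1, k + 1, h => by
    rw [stirling2, stirling2_eq_zero_of_lt (by omega), stirling2_eq_zero_of_lt (by omega)]
    ring

lemma stirling2_self : ∀ n : ℕ, stirling2 n n = 1
  | 0 => rfl
  | n + 1 => by
    rw [stirling2, stirling2_eq_zero_of_lt (by omega), stirling2_self n]; ring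

lemma stirling2_one_right : ∀ {n : ℕ}, 0 < n → stirling2 n 1 = 1
  | 1, _ => rfl
  | n + 2, _ => by
    have := stirling2_one_right (n := n + 1) (by omega)
    rw [stirling2, this, stirling2_zero_right]

open Finset Polynomial

lemma coeff_bellPoly (R : Type*) [CommRing R] (n k : ℕ) :
    (bellPoly R n).coeff k = (stirling2 n k : R) := by
  rw [bellPoly, finset_sum_coeff]
  simp only [coeff_C_mul, coeff_X_pow]
  rw [Finset.sum_eq_single k]
  · simp
  · intro b _ hb; rw [if_neg (Ne.symm hb), mul_zero]
  · intro h
    simp only [mem_range, not_lt] at h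
    rw [stirling2_eq_zero_of_lt (by omega)]
    simp

lemma bellPoly_succ (R : Type*) [CommRing R] (n : ℕ) :
    bellPoly R (n + 1) = X * bellPoly R n + X * derivative (bellPoly R n) := by
  ext k
  rw [coeff_add, coeff_bellPoly]
  cases k with
  | zero =>
    simp [mul_coeff_zero, stirling2_zero_right]
  | succ k =>
    rw [coeff_X_mul, coeff_X_mul, coeff_derivative, coeff_bellPoly, coeff_bellPoly, stirling2]
    push_cast
    ring

lemma F_rec (n k : ℕ) :
    ∑ j ∈ range (k+2), (-1:ℤ)^(k+1-j) * ((k+1).choose j) * j^(n+1)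
    = (k+1) * (∑ j ∈ range (k+2), (-1:ℤ)^(k+1-j) * ((k+1).choose j) * j^n
        + ∑ j ∈ range (k+1), (-1:ℤ)^(k-j) * (k.choose j) * j^n) := by
  have h2 : ∑ j ∈ range (k+1), (-1:ℤ)^(k-j) * (k.choose j) * j^n
      = ∑ j ∈ range (k+2), (-1:ℤ)^(k-j) * (k.choose j) * j^n := by
    rw [Finset.sum_range_succ (n := k+1)]
    simp [Nat.choose_eq_zero_of_lt]
  rw [h2, ← Finset.sum_add_distrib, Finset.mul_sum]
  refine Finset.sum_congr rfl fun j hj => ?_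
  rcases j with _ | i
  · simp only [Nat.sub_zero, Nat.choose_zero_right, Nat.cast_zero, Nat.cast_one, mul_one,
      pow_succ]
    ring
  · have hi : i + 1 < k + 2 := mem_range.mp hj
    rcases Nat.lt_or_ge i k with h | h
    · rw [show k + 1 - (i+1) = (k - (i+1)) + 1 from by omega,
        show k - (i + 1) + 1 = k - i from by omega] at *
      have hch : (((k+1).choose (i+1) : ℤ)) * (i+1) = (k+1) * (k.choose i) := by
        exact_mod_cast congrArg (Nat.cast : ℕ → ℤ) (Nat.add_one_mul_choose_eq k i).symm
      have hpas : (((k+1).choose (i+1) : ℤ)) = k.choose i + k.choose (i+1) := by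
        exact_mod_cast congrArg (Nat.cast : ℕ → ℤ) (Nat.choose_succ_succ k i)
      rw [show k - i = (k - (i+1)) + 1 from by omega, pow_succ]
      push_cast
      linear_combination (-((-1:ℤ)^(k-(i+1)) * ((i:ℤ)+1)^n)) * hch
        + ((k+1) * (-1:ℤ)^(k-(i+1)) * ((i:ℤ)+1)^n) * hpas
    · have : i = k := by omega
      subst this
      simp [Nat.choose_eq_zero_of_lt, Nat.sub_self]
      ring

lemma factorial_mul_stirling2 : ∀ n k : ℕ,
    (k.factorial : ℤ) * stirling2 n k
      = ∑ j ∈ range (k+1), (-1:ℤ)^(k-j) * (k.choose j) * j^n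
  | 0, 0 => by simp [stirling2]
  | 0, k+1 => by
    rw [stirling2_eq_zero_of_lt (by omega)]
    simp only [pow_zero, mul_one, Nat.cast_zero, mul_zero]
    rw [← Finset.sum_range_reflect]
    simp only [Nat.add_sub_cancel]
    have : ∀ j ∈ range (k+2), (-1:ℤ)^(k+1-(k+1-j)) * ((k+1).choose (k+1-j))
        = (-1:ℤ)^j * ((k+1).choose j) := by
      intro j hj
      have hj' : j ≤ k + 1 := by simpa [Nat.lt_succ_iff] using mem_range.mp hj
      rw [show k+1-(k+1-j) = j from by omega, Nat.choose_symm hj']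
    rw [Finset.sum_congr rfl this, Int.alternating_sum_range_choose, if_neg (by omega)]
  | n+1, 0 => by simp [stirling2_zero_right]
  | n+1, k+1 => by
    have ih1 := factorial_mul_stirling2 n (k+1)
    have ih2 := factorial_mul_stirling2 n k
    have hf : ((k+1).factorial : ℤ) = ((k:ℤ)+1) * k.factorial := by
      exact_mod_cast Nat.factorial_succ k
    rw [stirling2, F_rec]
    push_cast
    rw [hf] at ih1 ⊢
    linear_combination ((k:ℤ)+1) * ih1 + ((k:ℤ)+1) * ih2

lemma stirling2_cast_zmod (p : ℕ) [Fact p.Prime] (k : ℕ) (hk2 : 2 ≤ k) (hkp : k < p) :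
    (stirling2 p k : ZMod p) = 0 := by
  have h1 := congrArg (Int.cast : ℤ → ZMod p) (factorial_mul_stirling2 p k)
  have h2 := congrArg (Int.cast : ℤ → ZMod p) (factorial_mul_stirling2 1 k)
  push_cast at h1 h2
  simp only [ZMod.pow_card, pow_one] at h1 h2
  have h3 : (k.factorial : ZMod p) * (stirling2 p k : ZMod p)
      = (k.factorial : ZMod p) * (stirling2 1 k : ZMod p) := h1.trans h2.symm
  rw [stirling2_eq_zero_of_lt (show (1:ℕ) < k by omega), Nat.cast_zero, mul_zero] at h3
  have hfac : ((k.factorial : ZMod p)) ≠ 0 := by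
    rw [Ne, ZMod.natCast_eq_zero_iff]
    intro hdvd
    exact absurd ((Fact.out : p.Prime).dvd_factorial.mp hdvd) (by omega)
  exact (mul_eq_zero.mp h3).resolve_left hfac

lemma bellPoly_card (p : ℕ) [Fact p.Prime] :
    bellPoly (ZMod p) p = X + X ^ p := by
  have hp2 : 2 ≤ p := (Fact.out : p.Prime).two_le
  ext k
  rw [coeff_bellPoly, coeff_add, coeff_X, coeff_X_pow]
  by_cases h1 : k = 1
  · subst h1
    rw [stirling2_one_right (by omega), if_pos rfl, if_neg (by omega)]
    norm_num
  · by_cases hp : k = p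
    · subst hp
      rw [stirling2_self, if_neg (by omega), if_pos rfl]
      norm_num
    · rw [if_neg (by omega), if_neg (by omega)]
      rcases Nat.lt_or_ge k p with h | h
      · rcases Nat.eq_zero_or_pos k with rfl | hk
        · rw [show p = (p-1)+1 from by omega, stirling2_zero_right]; norm_num
        · rw [stirling2_cast_zmod p k (by omega) h]; norm_num
      · rw [stirling2_eq_zero_of_lt (by omega)]; norm_num

lemma bellPoly_zero (R : Type*) [CommRing R] : bellPoly R 0 = 1 := by
  simp [bellPoly, stirling2]

lemma bellPoly_one (R : Type*) [CommRing R] : bellPoly R 1 = X := by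
  rw [bellPoly]
  rw [Finset.sum_range_succ, Finset.sum_range_one]
  norm_num [stirling2_zero_right, stirling2_self]

noncomputable def Tbell (R : Type*) [CommRing R] : Module.End R (Polynomial R) :=
  LinearMap.mulLeft R X + (LinearMap.mulLeft R X) ∘ₗ
    (derivative : Polynomial R →ₗ[R] Polynomial R)

lemma Tbell_apply {R : Type*} [CommRing R] (f : Polynomial R) :
    Tbell R f = X * f + X * derivative f := rfl

lemma Tbell_bell {R : Type*} [CommRing R] (n : ℕ) :
    Tbell R (bellPoly R n) = bellPoly R (n + 1) := by
  rw [Tbell_apply, ← bellPoly_succ]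

lemma Tbell_pow_bell {R : Type*} [CommRing R] (m : ℕ) : ∀ n,
    (Tbell R ^ m) (bellPoly R n) = bellPoly R (n + m) := by
  induction m with
  | zero => intro n; rfl
  | succ m ih =>
    intro n
    rw [pow_succ, Module.End.mul_apply, Tbell_bell, ih (n+1)]
    congr 1
    omega

section CharP

variable (p : ℕ) [Fact p.Prime]

noncomputable def Mop : Module.End (ZMod p) (Polynomial (ZMod p)) :=
  LinearMap.mulLeft (ZMod p) (X ^ p)

lemma Mop_apply (f : Polynomial (ZMod p)) : Mop p f = X ^ p * f := rfl

lemma derivative_X_pow_p_mul (f : Polynomial (ZMod p)) :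
    derivative ((X : Polynomial (ZMod p)) ^ p * f) = X ^ p * derivative f := by
  rw [derivative_mul, derivative_X_pow]
  simp

lemma commute_Tbell_Mop : Commute (Tbell (ZMod p)) (Mop p) := by
  apply LinearMap.ext
  intro f
  rw [Module.End.mul_apply, Module.End.mul_apply, Mop_apply, Tbell_apply, Mop_apply, Tbell_apply,
    derivative_X_pow_p_mul]
  ring

lemma touchard (n : ℕ) :
    bellPoly (ZMod p) (n + p) = bellPoly (ZMod p) (n + 1) + X ^ p * bellPoly (ZMod p) n := by
  induction n with
  | zero =>
    rw [Nat.zero_add, bellPoly_card, bellPoly_one, bellPoly_zero, mul_one]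
  | succ n ih =>
    rw [show n + 1 + p = (n + p) + 1 from by omega, bellPoly_succ, ih,
      derivative_add, derivative_X_pow_p_mul, bellPoly_succ _ (n+1), bellPoly_succ _ n]
    ring

lemma key_pow (m : ℕ) : ∀ n : ℕ,
    (Tbell (ZMod p) ^ (p * m)) (bellPoly (ZMod p) n)
      = ((Tbell (ZMod p) + Mop p) ^ m) (bellPoly (ZMod p) n) := by
  induction m with
  | zero => intro n; simp
  | succ m ih =>
    intro n
    have hTpM : Commute (Tbell (ZMod p)) (Tbell (ZMod p) + Mop p) :=
      (Commute.refl _).add_right (commute_Tbell_Mop p)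
    have hMpM : Commute (Mop p) (Tbell (ZMod p) + Mop p) :=
      (commute_Tbell_Mop p).symm.add_right (Commute.refl _)
    rw [show p * (m + 1) = p * m + p from by ring, pow_add, Module.End.mul_apply,
      Tbell_pow_bell, touchard]
    rw [map_add, ← Mop_apply]
    rw [← Module.End.mul_apply (Tbell (ZMod p) ^ (p*m)) (Mop p),
      ((commute_Tbell_Mop p).pow_left (p*m)).eq, Module.End.mul_apply, ih n, ih (n+1)]
    rw [← Tbell_bell n, ← Module.End.mul_apply _ (Tbell (ZMod p)), (hTpM.pow_right m).symm.eq,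
      ← Module.End.mul_apply (Mop p) ((Tbell (ZMod p) + Mop p) ^ m)]
    rw [← LinearMap.add_apply, ← add_mul, ← pow_succ']

lemma Mop_pow (k : ℕ) (f : Polynomial (ZMod p)) :
    ((Mop p) ^ k) f = X ^ (p * k) * f := by
  induction k with
  | zero => simp
  | succ k ih =>
    rw [pow_succ', Module.End.mul_apply, ih, Mop_apply, ← mul_assoc, ← pow_add]
    congr 2
    ring

lemma endCharP : CharP (Module.End (ZMod p) (Polynomial (ZMod p))) p := by
  haveI : Nontrivial (Module.End (ZMod p) (Polynomial (ZMod p))) :=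
    ⟨⟨0, 1, fun h => by
      have := LinearMap.congr_fun h (1 : Polynomial (ZMod p))
      simp at this⟩⟩
  exact charP_of_injective_ringHom (algebraMap (ZMod p) (Module.End (ZMod p) (Polynomial (ZMod p)))).injective p

lemma zmod_main (a n : ℕ) :
    bellPoly (ZMod p) (p ^ a + n)
      = bellPoly (ZMod p) (n + 1)
        + bellPoly (ZMod p) n * ∑ r ∈ Finset.Icc 1 a, (X : Polynomial (ZMod p)) ^ (p ^ r) := by
  haveI := endCharP p
  induction a with
  | zero =>
    rw [pow_zero, show 1 + n = n + 1 from by omega]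
    simp
  | succ a ih =>
    have h1 : bellPoly (ZMod p) (p ^ (a+1) + n)
        = (Tbell (ZMod p) ^ (p ^ (a+1))) (bellPoly (ZMod p) n) := by
      rw [Tbell_pow_bell, Nat.add_comm]
    rw [h1, show p ^ (a+1) = p * p ^ a from by ring, key_pow,
      add_pow_char_pow_of_commute p a (commute_Tbell_Mop p), LinearMap.add_apply,
      Tbell_pow_bell, Mop_pow, show n + p ^ a = p ^ a + n from by omega, ih,
      Finset.sum_Icc_succ_top (by omega : 1 ≤ a + 1)]
    rw [show p * p ^ a = p ^ (a+1) from by ring]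
    ring

end CharP

lemma bellPoly_map {R S : Type*} [CommRing R] [CommRing S] (f : R →+* S) (n : ℕ) :
    (bellPoly R n).map f = bellPoly S n := by
  rw [bellPoly, Polynomial.map_sum, bellPoly]
  refine Finset.sum_congr rfl fun k _ => ?_
  rw [Polynomial.map_mul, Polynomial.map_C, Polynomial.map_pow, Polynomial.map_X, map_natCast]

open Polynomial in
/-- Gertsch–Robert congruence: `B_{p^a+n}(x) ≡ B_{n+1}(x) + B_n(x)·∑_{r=1}^a x^{p^r}`
mod `p·ℤ_p[x]`. -/
theorem bellPoly_gertsch_robert (p : ℕ) [Fact p.Prime] (a : ℕ) (ha : 0 < a) (n : ℕ) :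
    (p : Polynomial ℤ_[p]) ∣
      bellPoly ℤ_[p] (p ^ a + n) -
        (bellPoly ℤ_[p] (n + 1) + bellPoly ℤ_[p] n * ∑ r ∈ Finset.Icc 1 a, X ^ (p ^ r)) := by
  set D : Polynomial ℤ_[p] := bellPoly ℤ_[p] (p ^ a + n) -
      (bellPoly ℤ_[p] (n + 1) + bellPoly ℤ_[p] n * ∑ r ∈ Finset.Icc 1 a, X ^ (p ^ r)) with hDdef
  have hD : D.map (PadicInt.toZMod : ℤ_[p] →+* ZMod p) = 0 := by
    rw [hDdef, Polynomial.map_sub, Polynomial.map_add, Polynomial.map_mul, Polynomial.map_sum,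
      bellPoly_map, bellPoly_map, bellPoly_map]
    simp only [Polynomial.map_pow, Polynomial.map_X]
    rw [sub_eq_zero, zmod_main]
  rw [← Polynomial.C_eq_natCast, C_dvd_iff_dvd_coeff]
  intro i
  have h2 : PadicInt.toZMod (D.coeff i) = 0 := by
    have := congrArg (fun q => Polynomial.coeff q i) hD
    simpa [Polynomial.coeff_map] using this
  have h3 : D.coeff i ∈ RingHom.ker (PadicInt.toZMod : ℤ_[p] →+* ZMod p) := h2
  rw [PadicInt.ker_toZMod, PadicInt.maximalIdeal_eq_span_p, Ideal.mem_span_singleton] at h3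
  exact h3
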